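/- Let 𝒳 be a finite nonempty set, φ, B : 𝒳 → ℝ, and N, k ≥ 1. For each l ∈ {1,…,k} let w^{(l)} : {1,…,N}^l → ℝ be invariant under permutation of its arguments and vanish unless its arguments are pairwise distinct. For x ∈ 𝒳^N and i ∈ {1,…,N} define the canonical parameter Ψ_i(x) = Σ_{l=1}^{k} Σ_{α_2,…,α_l ∈ {1,…,N}} w^{(l)}(i, α_2, …, α_l) ∏_{j=2}^{l} φ(x_{α_j}). Suppose P is a strictly positive probability mass function on 𝒳^N whose full conditionals are the univariate exponential family distributions P(x_i | x_{−i}) = exp( Ψ_i(x) φ(x_i) + B(x_i) ) / Σ_{y∈𝒳} exp( Ψ_i(x with i-th coordinate y) φ(y) + B(y) ) for every i and every x. Then the joint distribution is uniquely determined and equals the graphical-model exponential family member P(x) = exp( Σ_{l=1}^{k} (1/l) Σ_{α_1,…,α_l ∈ {1,…,N}} w^{(l)}(α_1,…,α_l) ∏_{j=1}^{l} φ(x_{α_j}) + Σ_{i=1}^{N} B(x_i) − A ), where A is the log-normalization constant. -/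

import Mathlib

open Real Finset

noncomputable section

/-- Tensor-factorized canonical parameter
`Ψ_i(x) = Σ_{l=1}^{k} Σ_{α_2,…,α_l} w^{(l)}(i, α_2, …, α_l) ∏_{j=2}^{l} φ(x_{α_j})`. -/
def Psi (X : Type*) (φ : X → ℝ) (N k : ℕ) (w : (l : ℕ) → (Fin l → Fin N) → ℝ)
    (x : Fin N → X) (i : Fin N) : ℝ :=
  ∑ l ∈ Finset.range k, ∑ α : Fin l → Fin N,
    w (l + 1) (Fin.cons i α) * ∏ j, φ (x (α j))

/-- The graphical-model energy
`Σ_{l=1}^{k} (1/l) Σ_{α_1,…,α_l} w^{(l)}(α_1,…,α_l) ∏_{j=1}^{l} φ(x_{α_j}) + Σ_i B(x_i)`. -/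
def jointEnergy (X : Type*) (φ B : X → ℝ) (N k : ℕ)
    (w : (l : ℕ) → (Fin l → Fin N) → ℝ) (x : Fin N → X) : ℝ :=
  (∑ l ∈ Finset.range k, (1 / ((l : ℝ) + 1)) *
      ∑ α : Fin (l + 1) → Fin N, w (l + 1) α * ∏ j, φ (x (α j)))
    + ∑ i, B (x i)

/-- Sum over tuples whose first entry is `i` equals a sum over the tail. -/
private lemma sum_cond_zero {N l : ℕ} (f : (Fin (l+1) → Fin N) → ℝ) (i : Fin N) :
    (∑ α : Fin (l+1) → Fin N, if α 0 = i then f α else 0)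
      = ∑ α' : Fin l → Fin N, f (Fin.cons i α') := by
  rw [← Equiv.sum_comp (Fin.consEquiv (fun _ => Fin N))
      (fun α => if α 0 = i then f α else 0)]
  rw [Fintype.sum_prod_type]
  simp only [Fin.consEquiv_apply, Fin.cons_zero]
  rw [Finset.sum_comm]
  simp only [Finset.sum_ite_eq' Finset.univ i, Finset.mem_univ, if_true]
  rfl

/-- For a permutation-invariant summand, the sum over tuples whose `j`-th entry is `i`
equals the sum over tails of `Fin.cons i ·`. -/
private lemma sum_cond {N l : ℕ} (f : (Fin (l+1) → Fin N) → ℝ)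
    (hf : ∀ (e : Equiv.Perm (Fin (l+1))) (α), f (α ∘ e) = f α)
    (i : Fin N) (j : Fin (l+1)) :
    (∑ α : Fin (l+1) → Fin N, if α j = i then f α else 0)
      = ∑ α' : Fin l → Fin N, f (Fin.cons i α') := by
  rw [← sum_cond_zero f i]
  exact Fintype.sum_equiv
    ⟨fun α => α ∘ (Equiv.swap (0 : Fin (l+1)) j),
     fun α => α ∘ (Equiv.swap (0 : Fin (l+1)) j),
     fun α => by funext t; simp, fun α => by funext t; simp⟩
    _ _ (fun α => by
      simp only [Equiv.coe_fn_mk, Function.comp_apply, Equiv.swap_apply_left]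
      rw [hf (Equiv.swap 0 j) α])

/-- Double counting: summing `f α` weighted by the number of occurrences of `i` in `α`. -/
private lemma sum_mul_count {N l : ℕ} (f : (Fin (l+1) → Fin N) → ℝ)
    (hf : ∀ (e : Equiv.Perm (Fin (l+1))) (α), f (α ∘ e) = f α) (i : Fin N) :
    (∑ α : Fin (l+1) → Fin N, f α * (∑ j : Fin (l+1), if α j = i then (1:ℝ) else 0))
      = ((l:ℝ)+1) * ∑ α' : Fin l → Fin N, f (Fin.cons i α') := by
  have h1 : ∀ α : Fin (l+1) → Fin N,
      f α * (∑ j : Fin (l+1), if α j = i then (1:ℝ) else 0)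
        = ∑ j : Fin (l+1), if α j = i then f α else 0 := by
    intro α
    rw [Finset.mul_sum]
    exact Finset.sum_congr rfl fun j _ => by split <;> simp
  simp_rw [h1]
  rw [Finset.sum_comm]
  rw [Finset.sum_congr rfl (fun j _ => sum_cond f hf i j), Finset.sum_const, card_univ,
    Fintype.card_fin, nsmul_eq_mul]
  push_cast
  ring

/-- The key per-level identity for the energy difference along one site. -/
private lemma S_diff {X : Type*} [Fintype X] [DecidableEq X] (φ : X → ℝ) {N l : ℕ}
    (w1 : (Fin (l+1) → Fin N) → ℝ)
    (hsym1 : ∀ (e : Equiv.Perm (Fin (l+1))) (α), w1 (α ∘ e) = w1 α)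
    (hdist1 : ∀ α : Fin (l+1) → Fin N, ¬ Function.Injective α → w1 α = 0)
    (i : Fin N) (x : Fin N → X) (y : X) :
    (∑ α : Fin (l+1) → Fin N, w1 α * ∏ j, φ (x (α j)))
      - (∑ α : Fin (l+1) → Fin N, w1 α * ∏ j, φ (Function.update x i y (α j)))
    = ((l:ℝ)+1) * ((φ (x i) - φ y)
        * ∑ α' : Fin l → Fin N, w1 (Fin.cons i α') * ∏ j, φ (x (α' j))) := by
  classical
  set x' := Function.update x i y with hx'
  set f : (Fin (l+1) → Fin N) → ℝ := fun α => w1 α * ∏ j, φ (x (α j)) with hfdef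
  set g : (Fin (l+1) → Fin N) → ℝ := fun α => w1 α * ∏ j, φ (x' (α j)) with hgdef
  have hfinv : ∀ (e : Equiv.Perm (Fin (l+1))) (α), f (α ∘ e) = f α := by
    intro e α
    simp only [hfdef, Function.comp_apply]
    rw [hsym1 e α, Equiv.prod_comp e (fun j => φ (x (α j)))]
  have hginv : ∀ (e : Equiv.Perm (Fin (l+1))) (α), g (α ∘ e) = g α := by
    intro e α
    simp only [hgdef, Function.comp_apply]
    rw [hsym1 e α, Equiv.prod_comp e (fun j => φ (x' (α j)))]
  have claimB : ∀ α : Fin (l+1) → Fin N,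
      f α - g α = f α * (∑ j : Fin (l+1), if α j = i then (1:ℝ) else 0)
                 - g α * (∑ j : Fin (l+1), if α j = i then (1:ℝ) else 0) := by
    intro α
    by_cases hinj : Function.Injective α
    · by_cases hmem : ∃ j, α j = i
      · obtain ⟨j0, hj0⟩ := hmem
        have hcnt : (∑ j : Fin (l+1), if α j = i then (1:ℝ) else 0) = 1 := by
          have : ∀ j : Fin (l+1), (if α j = i then (1:ℝ) else 0) = if j = j0 then 1 else 0 := by
            intro j
            by_cases h : j = j0
            · subst h; simp [hj0]
            · have : α j ≠ i := fun hc => h (hinj (hc.trans hj0.symm))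
              simp [this, h]
          rw [Finset.sum_congr rfl (fun j _ => this j), Finset.sum_ite_eq' Finset.univ j0]
          simp
        rw [hcnt, mul_one, mul_one]
      · push_neg at hmem
        have hcnt : (∑ j : Fin (l+1), if α j = i then (1:ℝ) else 0) = 0 := by
          refine Finset.sum_eq_zero fun j _ => by simp [hmem j]
        have hfg : f α = g α := by
          simp only [hfdef, hgdef]
          congr 1
          refine Finset.prod_congr rfl fun j _ => ?_
          rw [hx', Function.update_of_ne (hmem j)]
        rw [hcnt, hfg]; ring
    · have hw : w1 α = 0 := hdist1 α hinj
      simp [hfdef, hgdef, hw]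
  have hsplit : (∑ α : Fin (l+1) → Fin N, f α) - (∑ α, g α)
      = ((l:ℝ)+1) * (∑ α' : Fin l → Fin N, f (Fin.cons i α'))
        - ((l:ℝ)+1) * (∑ α' : Fin l → Fin N, g (Fin.cons i α')) := by
    rw [← Finset.sum_sub_distrib, Finset.sum_congr rfl (fun α _ => claimB α),
      Finset.sum_sub_distrib, sum_mul_count f hfinv i, sum_mul_count g hginv i]
  have hcons : ∀ α' : Fin l → Fin N,
      f (Fin.cons i α') - g (Fin.cons i α')
        = (φ (x i) - φ y) * (w1 (Fin.cons i α') * ∏ j, φ (x (α' j))) := by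
    intro α'
    by_cases hmem : ∃ j, α' j = i
    · obtain ⟨j0, hj0⟩ := hmem
      have hninj : ¬ Function.Injective (Fin.cons i α' : Fin (l+1) → Fin N) := by
        intro hinj
        have h1 : (Fin.cons i α' : Fin (l+1) → Fin N) j0.succ
            = (Fin.cons i α' : Fin (l+1) → Fin N) 0 := by
          simp [Fin.cons_succ, Fin.cons_zero, hj0]
        exact (Fin.succ_ne_zero j0) (hinj h1)
      have hw : w1 (Fin.cons i α') = 0 := hdist1 _ hninj
      simp [hfdef, hgdef, hw]
    · push_neg at hmem
      have hprod : ∀ z : Fin N → X,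
          (∏ j : Fin (l+1), φ (z ((Fin.cons i α' : Fin (l+1) → Fin N) j)))
            = φ (z i) * ∏ j : Fin l, φ (z (α' j)) := by
        intro z
        rw [Fin.prod_univ_succ]
        simp [Fin.cons_zero, Fin.cons_succ]
      have hpx' : (∏ j : Fin l, φ (x' (α' j))) = ∏ j : Fin l, φ (x (α' j)) := by
        refine Finset.prod_congr rfl fun j _ => ?_
        rw [hx', Function.update_of_ne (hmem j)]
      simp only [hfdef, hgdef, hprod x, hprod x', hpx']
      rw [hx', Function.update_self]
      ring
  rw [hsplit, ← mul_sub, ← Finset.sum_sub_distrib,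
    Finset.sum_congr rfl (fun α' _ => hcons α'), ← Finset.mul_sum]

/-- `Ψ_i` does not depend on the `i`-th coordinate. -/
private lemma Psi_update {X : Type*} [Fintype X] [DecidableEq X] (φ : X → ℝ) (N k : ℕ)
    (w : (l : ℕ) → (Fin l → Fin N) → ℝ)
    (hdist : ∀ l, l ≤ k → ∀ α : Fin l → Fin N, ¬ Function.Injective α → w l α = 0)
    (i : Fin N) (x : Fin N → X) (y : X) :
    Psi X φ N k w (Function.update x i y) i = Psi X φ N k w x i := by
  unfold Psi
  refine Finset.sum_congr rfl fun l hl => Finset.sum_congr rfl fun α' _ => ?_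
  have hlk : l + 1 ≤ k := Finset.mem_range.mp hl
  by_cases hmem : ∃ j, α' j = i
  · obtain ⟨j0, hj0⟩ := hmem
    have hninj : ¬ Function.Injective (Fin.cons i α' : Fin (l+1) → Fin N) := by
      intro hinj
      have h1 : (Fin.cons i α' : Fin (l+1) → Fin N) j0.succ
          = (Fin.cons i α' : Fin (l+1) → Fin N) 0 := by
        simp [Fin.cons_succ, Fin.cons_zero, hj0]
      exact (Fin.succ_ne_zero j0) (hinj h1)
    rw [hdist (l+1) hlk _ hninj]
    simp
  · push_neg at hmem
    congr 1
    exact Finset.prod_congr rfl fun j _ => by rw [Function.update_of_ne (hmem j)]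

/-- Difference of energies along one coordinate. -/
private lemma energy_diff {X : Type*} [Fintype X] [DecidableEq X] (φ B : X → ℝ) (N k : ℕ)
    (w : (l : ℕ) → (Fin l → Fin N) → ℝ)
    (hsym : ∀ l, l ≤ k → ∀ (e : Equiv.Perm (Fin l)) (α : Fin l → Fin N), w l (α ∘ e) = w l α)
    (hdist : ∀ l, l ≤ k → ∀ α : Fin l → Fin N, ¬ Function.Injective α → w l α = 0)
    (i : Fin N) (x : Fin N → X) (y : X) :
    jointEnergy X φ B N k w x - jointEnergy X φ B N k w (Function.update x i y)
      = (Psi X φ N k w x i * φ (x i) + B (x i)) - (Psi X φ N k w x i * φ y + B y) := by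
  unfold jointEnergy
  have hB : (∑ t, B (x t)) - (∑ t, B (Function.update x i y t)) = B (x i) - B y := by
    have : (fun t => B (Function.update x i y t))
        = Function.update (fun t => B (x t)) i (B y) := by
      funext t
      by_cases h : t = i
      · subst h; simp
      · simp [Function.update_of_ne h]
    rw [this, Finset.sum_update_of_mem (Finset.mem_univ i),
      ← Finset.add_sum_erase Finset.univ (fun t => B (x t)) (Finset.mem_univ i)]
    simp [Finset.sdiff_singleton_eq_erase]
    ring
  have hS : (∑ l ∈ Finset.range k, (1 / ((l : ℝ) + 1)) *
        ∑ α : Fin (l + 1) → Fin N, w (l + 1) α * ∏ j, φ (x (α j)))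
      - (∑ l ∈ Finset.range k, (1 / ((l : ℝ) + 1)) *
        ∑ α : Fin (l + 1) → Fin N, w (l + 1) α * ∏ j, φ (Function.update x i y (α j)))
      = (φ (x i) - φ y) * Psi X φ N k w x i := by
    rw [← Finset.sum_sub_distrib]
    unfold Psi
    rw [Finset.mul_sum]
    refine Finset.sum_congr rfl fun l hl => ?_
    have hlk : l + 1 ≤ k := Finset.mem_range.mp hl
    rw [← mul_sub, S_diff φ (w (l+1)) (hsym (l+1) hlk) (hdist (l+1) hlk) i x y]
    have hl1 : ((l:ℝ) + 1) ≠ 0 := by positivity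
    field_simp
  linear_combination hS + hB

/-- **Lemma B.1 / Proposition 1 of Yang et al..** If the full conditionals of a
strictly positive pmf on `𝒳^N` are univariate exponential family distributions with
tensor-factorized canonical parameters `Ψ_i` built from symmetric weight tensors `w^{(l)}`
vanishing on tuples with repeated arguments, then the joint distribution is uniquely
determined and is the corresponding graphical-model exponential family member. -/
theorem node_conditionals_determine_joint
    (X : Type*) [Fintype X] [DecidableEq X] [Nonempty X]
    (φ B : X → ℝ) (N k : ℕ) (hN : 1 ≤ N) (hk : 1 ≤ k)
    (w : (l : ℕ) → (Fin l → Fin N) → ℝ)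
    (hsym : ∀ l, l ≤ k → ∀ (e : Equiv.Perm (Fin l)) (α : Fin l → Fin N), w l (α ∘ e) = w l α)
    (hdist : ∀ l, l ≤ k → ∀ α : Fin l → Fin N, ¬ Function.Injective α → w l α = 0)
    (P : (Fin N → X) → ℝ)
    (hpos : ∀ x, 0 < P x) (hsum : ∑ x : Fin N → X, P x = 1)
    (hcond : ∀ (i : Fin N) (x : Fin N → X),
      P x / (∑ y : X, P (Function.update x i y))
        = Real.exp (Psi X φ N k w x i * φ (x i) + B (x i))
          / ∑ y : X, Real.exp (Psi X φ N k w (Function.update x i y) i * φ y + B y)) :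
    ∀ x : Fin N → X,
      P x = Real.exp (jointEnergy X φ B N k w x)
        / ∑ y : Fin N → X, Real.exp (jointEnergy X φ B N k w y) := by
  classical
  set E : (Fin N → X) → ℝ := jointEnergy X φ B N k w with hE
  -- single-site balance equation
  have key : ∀ (i : Fin N) (x : Fin N → X) (y : X),
      P x * Real.exp (E (Function.update x i y))
        = P (Function.update x i y) * Real.exp (E x) := by
    intro i x y
    set x' := Function.update x i y with hx'
    have hPsiU : ∀ z : X, Psi X φ N k w (Function.update x i z) i = Psi X φ N k w x i :=
      fun z => Psi_update φ N k w hdist i x z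
    have h1 := hcond i x
    have h2 := hcond i x'
    have hupd : ∀ z : X, Function.update x' i z = Function.update x i z := by
      intro z; rw [hx', Function.update_idem]
    simp only [hPsiU] at h1
    simp only [hupd, hPsiU] at h2
    rw [show x' i = y from Function.update_self i y x] at h2
    set S := ∑ z : X, P (Function.update x i z) with hSdef
    set T := ∑ z : X, Real.exp (Psi X φ N k w x i * φ z + B z) with hTdef
    have hSpos : 0 < S := Finset.sum_pos (fun z _ => hpos _) Finset.univ_nonempty
    have hTpos : 0 < T := Finset.sum_pos (fun z _ => Real.exp_pos _) Finset.univ_nonempty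
    have h1' : P x * T = Real.exp (Psi X φ N k w x i * φ (x i) + B (x i)) * S :=
      (div_eq_div_iff hSpos.ne' hTpos.ne').mp h1
    have h2' : P x' * T = Real.exp (Psi X φ N k w x i * φ y + B y) * S :=
      (div_eq_div_iff hSpos.ne' hTpos.ne').mp (by rw [← hPsiU y]; exact h2)
    have hcancel : P x * Real.exp (Psi X φ N k w x i * φ y + B y)
        = P x' * Real.exp (Psi X φ N k w x i * φ (x i) + B (x i)) := by
      apply mul_right_cancel₀ hTpos.ne'
      calc P x * Real.exp (Psi X φ N k w x i * φ y + B y) * T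
          = (P x * T) * Real.exp (Psi X φ N k w x i * φ y + B y) := by ring
        _ = (Real.exp (Psi X φ N k w x i * φ (x i) + B (x i)) * S)
              * Real.exp (Psi X φ N k w x i * φ y + B y) := by rw [h1']
        _ = (P x' * T) * Real.exp (Psi X φ N k w x i * φ (x i) + B (x i)) := by
              rw [h2']; ring
        _ = P x' * Real.exp (Psi X φ N k w x i * φ (x i) + B (x i)) * T := by ring
    have hEdiff : E x - E x'
        = (Psi X φ N k w x i * φ (x i) + B (x i)) - (Psi X φ N k w x i * φ y + B y) := by
      rw [hE, hx']
      exact energy_diff φ B N k w hsym hdist i x y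
    have hEE : Real.exp (E x') * Real.exp (Psi X φ N k w x i * φ (x i) + B (x i))
        = Real.exp (E x) * Real.exp (Psi X φ N k w x i * φ y + B y) := by
      rw [← Real.exp_add, ← Real.exp_add]
      congr 1
      linarith [hEdiff]
    apply mul_right_cancel₀ (Real.exp_ne_zero (Psi X φ N k w x i * φ y + B y))
    calc P x * Real.exp (E x') * Real.exp (Psi X φ N k w x i * φ y + B y)
        = (P x * Real.exp (Psi X φ N k w x i * φ y + B y)) * Real.exp (E x') := by ring
      _ = (P x' * Real.exp (Psi X φ N k w x i * φ (x i) + B (x i))) * Real.exp (E x') := by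
            rw [hcancel]
      _ = P x' * (Real.exp (E x') * Real.exp (Psi X φ N k w x i * φ (x i) + B (x i))) := by
            ring
      _ = P x' * (Real.exp (E x) * Real.exp (Psi X φ N k w x i * φ y + B y)) := by rw [hEE]
      _ = P x' * Real.exp (E x) * Real.exp (Psi X φ N k w x i * φ y + B y) := by ring
  -- global balance by changing coordinates one at a time
  have global : ∀ x z : Fin N → X, P x * Real.exp (E z) = P z * Real.exp (E x) := by
    have main : ∀ n (x z : Fin N → X),
        (Finset.univ.filter (fun t => x t ≠ z t)).card = n →
        P x * Real.exp (E z) = P z * Real.exp (E x) := by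
      intro n
      induction n with
      | zero =>
        intro x z h
        have hxz : x = z := by
          funext t
          by_contra hc
          have ht : t ∈ Finset.univ.filter (fun t => x t ≠ z t) := by
            simp [hc]
          rw [Finset.card_eq_zero.mp h] at ht
          exact absurd ht (Finset.notMem_empty t)
        rw [hxz]
      | succ n ih =>
        intro x z h
        have hne : ∃ t, x t ≠ z t := by
          by_contra hc
          push_neg at hc
          simp only [hc, ne_eq, not_true_eq_false, Finset.filter_false,
            Finset.card_empty] at h
          omega
        obtain ⟨i, hi⟩ := hne
        set x1 := Function.update x i (z i) with hx1
        have hcard : (Finset.univ.filter (fun t => x1 t ≠ z t)).card = n := by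
          have hset : Finset.univ.filter (fun t => x1 t ≠ z t)
              = (Finset.univ.filter (fun t => x t ≠ z t)).erase i := by
            ext t
            simp only [Finset.mem_filter, Finset.mem_erase, Finset.mem_univ, true_and]
            by_cases h' : t = i
            · subst h'
              simp [hx1, Function.update_self]
            · simp [hx1, Function.update_of_ne h', h']
          rw [hset, Finset.card_erase_of_mem (by simp [hi]), h]
          rfl
        have h1 := key i x (z i)
        have h2 := ih x1 z hcard
        apply mul_right_cancel₀ (Real.exp_ne_zero (E x1))
        calc P x * Real.exp (E z) * Real.exp (E x1)
            = (P x * Real.exp (E x1)) * Real.exp (E z) := by ring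
          _ = (P x1 * Real.exp (E x)) * Real.exp (E z) := by rw [← hx1] at h1; rw [h1]
          _ = (P x1 * Real.exp (E z)) * Real.exp (E x) := by ring
          _ = (P z * Real.exp (E x1)) * Real.exp (E x) := by rw [h2]
          _ = P z * Real.exp (E x) * Real.exp (E x1) := by ring
    intro x z
    exact main _ x z rfl
  -- conclude
  intro x
  have hZpos : 0 < ∑ y : Fin N → X, Real.exp (E y) :=
    Finset.sum_pos (fun z _ => Real.exp_pos _) Finset.univ_nonempty
  rw [eq_div_iff hZpos.ne']
  calc P x * ∑ y : Fin N → X, Real.exp (E y)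
      = ∑ z : Fin N → X, P x * Real.exp (E z) := by rw [Finset.mul_sum]
    _ = ∑ z : Fin N → X, P z * Real.exp (E x) := Finset.sum_congr rfl fun z _ => global x z
    _ = (∑ z : Fin N → X, P z) * Real.exp (E x) := by rw [Finset.sum_mul]
    _ = Real.exp (E x) := by rw [hsum, one_mul]

end
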